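/- For every admissible list A of integers, its adjoint A* satisfies (A*).reverse = (A.reverse)* and d(A) = d(A*). -/
import Mathlib


/-- Discriminant of a linear chain: determinant of the tridiagonal matrix. -/
def chainD : List ℤ → ℤ
  | [] => 1
  | [a] => a
  | a :: b :: L => a * chainD (b :: L) - chainD L

/-- A list is admissible if it is nonempty and all entries are at least 2. -/
def Admissible (A : List ℤ) : Prop := A ≠ [] ∧ ∀ x ∈ A, 2 ≤ x

/-- Inductance e(A) = d(Ā)/d(A). -/
def inductance (A : List ℤ) : ℚ := (chainD A.tail : ℚ) / (chainD A : ℚ)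

/-- Plumbing concatenation ⋆ of linear chains. -/
def pstar : List ℤ → List ℤ → List ℤ
  | [], B => B
  | A, [] => A
  | [a], b :: B => (a + b - 1) :: B
  | a :: A, B => a :: pstar A B

/-- TW n : the list of n copies of 2. -/
def TW (n : ℕ) : List ℤ := List.replicate n 2

namespace Adj

def qmul : ℤ×ℤ×ℤ×ℤ → ℤ×ℤ×ℤ×ℤ → ℤ×ℤ×ℤ×ℤ
  | (a,b,c,d), (e,f,g,h) => (a*e+b*g, a*f+b*h, c*e+d*g, c*f+d*h)

def F : List ℤ → ℤ×ℤ×ℤ×ℤ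
  | [] => (1,0,0,1)
  | a :: L => (a * (F L).1 - (F L).2.2.1, a * (F L).2.1 - (F L).2.2.2, (F L).1, (F L).2.1)

lemma F_cons (a : ℤ) (L : List ℤ) :
    F (a :: L) = (a * (F L).1 - (F L).2.2.1, a * (F L).2.1 - (F L).2.2.2, (F L).1, (F L).2.1) := rfl

lemma F_cons' (a : ℤ) (L : List ℤ) : F (a :: L) = qmul (a,-1,1,0) (F L) := by
  rcases hF : F L with ⟨p,q,r,s⟩
  simp only [F_cons, hF, qmul, Prod.mk.injEq]
  refine ⟨by ring, by ring, by ring, by ring⟩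

lemma qmul_assoc (x y z : ℤ×ℤ×ℤ×ℤ) : qmul (qmul x y) z = qmul x (qmul y z) := by
  obtain ⟨a,b,c,d⟩ := x; obtain ⟨e,f,g,h⟩ := y; obtain ⟨i,j,k,l⟩ := z
  simp only [qmul, Prod.mk.injEq]
  refine ⟨by ring, by ring, by ring, by ring⟩

lemma qmul_one_left (x : ℤ×ℤ×ℤ×ℤ) : qmul (1,0,0,1) x = x := by
  obtain ⟨a,b,c,d⟩ := x
  simp only [qmul, Prod.mk.injEq]
  refine ⟨by ring, by ring, by ring, by ring⟩

lemma F_append (A B : List ℤ) : F (A ++ B) = qmul (F A) (F B) := by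
  induction A with
  | nil => simp [F, qmul_one_left]
  | cons a L ih =>
    rw [List.cons_append, F_cons', ih, F_cons', qmul_assoc]

lemma F_spec : ∀ A : List ℤ, (F A).1 = chainD A ∧ (A ≠ [] → (F A).2.2.1 = chainD A.tail) := by
  intro A
  induction A with
  | nil => exact ⟨rfl, by simp⟩
  | cons a L ih =>
    obtain ⟨ih1, ih2⟩ := ih
    refine ⟨?_, fun _ => by simp [F_cons, ih1]⟩
    cases L with
    | nil => simp [F, chainD]
    | cons b M =>
      have h2 := ih2 (by simp)
      rw [F_cons]
      show a * (F (b::M)).1 - (F (b::M)).2.2.1 = chainD (a::b::M)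
      rw [ih1, h2]
      rfl

lemma F_p (A : List ℤ) : (F A).1 = chainD A := (F_spec A).1

lemma F_r (A : List ℤ) (h : A ≠ []) : (F A).2.2.1 = chainD A.tail := (F_spec A).2 h

lemma F_det (A : List ℤ) : (F A).1 * (F A).2.2.2 - (F A).2.1 * (F A).2.2.1 = 1 := by
  induction A with
  | nil => rfl
  | cons a L ih =>
    rcases hF : F L with ⟨p,q,r,s⟩
    rw [hF] at ih
    simp only [F_cons, hF] at *
    linear_combination ih

lemma F_reverse (A : List ℤ) :
    F A.reverse = ((F A).1, -(F A).2.2.1, -(F A).2.1, (F A).2.2.2) := by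
  induction A with
  | nil => simp [F]
  | cons a L ih =>
    rcases hF : F L with ⟨p,q,r,s⟩
    rw [hF] at ih
    rw [List.reverse_cons, F_append, ih]
    simp only [F_cons, hF, F, qmul, Prod.mk.injEq]
    refine ⟨by ring, by ring, by ring, by ring⟩

lemma chainD_reverse (A : List ℤ) : chainD A.reverse = chainD A := by
  rw [← F_p, F_reverse, ← F_p]

/-- The key Bezout identity: d(tail A) * d(tail A.reverse) + s * d(A) = 1. -/
lemma key (A : List ℤ) (h : A ≠ []) :
    ∃ s : ℤ, chainD A.tail * chainD A.reverse.tail + s * chainD A = 1 := by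
  refine ⟨(F A).2.2.2, ?_⟩
  have hr : A.reverse ≠ [] := by simpa using h
  rw [← F_r A h, ← F_r A.reverse hr, F_reverse, ← F_p]
  have := F_det A
  linear_combination this

lemma dpos : ∀ A : List ℤ, Admissible A → 1 ≤ chainD A.tail ∧ chainD A.tail < chainD A := by
  intro A
  induction A with
  | nil => intro h; exact absurd rfl h.1
  | cons a L ih =>
    intro ⟨_, hmem⟩
    have ha : 2 ≤ a := hmem a (by simp)
    cases L with
    | nil => simp [chainD]; omega
    | cons b M =>
      have hL : Admissible (b :: M) := ⟨by simp, fun x hx => hmem x (by simp [hx])⟩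
      obtain ⟨h1, h2⟩ := ih hL
      have hd : chainD (a :: b :: M) = a * chainD (b :: M) - chainD M := rfl
      simp only [List.tail_cons] at *
      constructor
      · omega
      · rw [hd]; nlinarith

lemma admissible_reverse {A : List ℤ} (h : Admissible A) : Admissible A.reverse :=
  ⟨by simpa using h.1, fun x hx => h.2 x (by simpa using hx)⟩

end Adj

namespace Adj

lemma ind_bounds {A : List ℤ} (h : Admissible A) : 0 < inductance A ∧ inductance A < 1 := by
  obtain ⟨h1, h2⟩ := dpos A h
  have hq : (0:ℚ) < (chainD A : ℚ) := by exact_mod_cast lt_of_le_of_lt (by linarith) h2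
  have hr : (0:ℚ) < (chainD A.tail : ℚ) := by exact_mod_cast lt_of_lt_of_le one_pos h1
  constructor
  · exact div_pos hr hq
  · rw [inductance, div_lt_one hq]; exact_mod_cast h2

/-- tail value: 0 for empty list, inductance otherwise -/
noncomputable def tv (L : List ℤ) : ℚ := if L = [] then 0 else inductance L

lemma tv_bounds {L : List ℤ} (h : L = [] ∨ Admissible L) : 0 ≤ tv L ∧ tv L < 1 := by
  rcases h with h | h
  · simp [tv, h]
  · rw [tv, if_neg h.1]
    exact ⟨le_of_lt (ind_bounds h).1, (ind_bounds h).2⟩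

lemma tv_eq_zero {L : List ℤ} (h : L = [] ∨ Admissible L) (h0 : tv L = 0) : L = [] := by
  rcases h with h | h
  · exact h
  · rw [tv, if_neg h.1] at h0
    exact absurd h0 (ne_of_gt (ind_bounds h).1)

lemma ind_cons (a : ℤ) (L : List ℤ) (h : L = [] ∨ Admissible L) :
    inductance (a :: L) = 1 / ((a : ℚ) - tv L) := by
  rcases h with h | h
  · subst h
    simp [inductance, tv, chainD]
  · have h1 := (dpos L h).1
    have hq : ((chainD L : ℚ)) ≠ 0 := by
      have hz : (0:ℤ) < chainD L := by
        have := (dpos L h).2; omega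
      exact_mod_cast ne_of_gt hz
    have hd : chainD (a :: L) = a * chainD L - chainD L.tail := by
      obtain ⟨b, M, rfl⟩ := List.exists_cons_of_ne_nil h.1
      rfl
    rw [inductance, tv, if_neg h.1, inductance, List.tail_cons, hd]
    have hcast : ((a * chainD L - chainD L.tail : ℤ) : ℚ)
        = (a:ℚ) * (chainD L:ℚ) - (chainD L.tail:ℚ) := by push_cast; ring
    have hdd : (a:ℚ) - (chainD L.tail:ℚ)/(chainD L:ℚ)
        = ((a:ℚ)*(chainD L:ℚ) - (chainD L.tail:ℚ))/(chainD L:ℚ) := by field_simp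
    rw [hcast, hdd, one_div_div]

lemma tail_adm {a : ℤ} {L : List ℤ} (h : Admissible (a :: L)) : L = [] ∨ Admissible L := by
  cases L with
  | nil => exact Or.inl rfl
  | cons b M => exact Or.inr ⟨by simp, fun x hx => h.2 x (by simp [hx])⟩

lemma head_two {a : ℤ} {L : List ℤ} (h : Admissible (a :: L)) : 2 ≤ a := h.2 a (by simp)

lemma ind_inj : ∀ B : List ℤ, ∀ C : List ℤ, Admissible B → Admissible C →
    inductance B = inductance C → B = C := by
  intro B
  induction B with
  | nil => intro C hB _ _; exact absurd rfl hB.1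
  | cons a L ih =>
    intro C hB hC heq
    obtain ⟨c, M, rfl⟩ := List.exists_cons_of_ne_nil hC.1
    have htL := tail_adm hB
    have htM := tail_adm hC
    rw [ind_cons a L htL, ind_cons c M htM] at heq
    have hbL := tv_bounds htL
    have hbM := tv_bounds htM
    have ha := head_two hB
    have hc := head_two hC
    have hLne : ((a : ℚ) - tv L) ≠ 0 := by
      have : (2:ℚ) ≤ (a:ℚ) := by exact_mod_cast ha
      nlinarith [hbL.2, hbL.1]
    have hMne : ((c : ℚ) - tv M) ≠ 0 := by
      have : (2:ℚ) ≤ (c:ℚ) := by exact_mod_cast hc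
      nlinarith [hbM.2, hbM.1]
    rw [div_eq_div_iff hLne hMne] at heq
    have heq2 : (a : ℚ) - tv L = (c : ℚ) - tv M := by linarith
    have hac : a = c := by
      have h1 : ((a - c : ℤ) : ℚ) = tv L - tv M := by push_cast; linarith
      have h2 : ((a - c : ℤ) : ℚ) < 1 := by rw [h1]; linarith [hbL.2, hbM.1]
      have h3 : (-1 : ℚ) < ((a - c : ℤ) : ℚ) := by rw [h1]; linarith [hbL.1, hbM.2]
      have h2' : (a - c : ℤ) < 1 := by exact_mod_cast h2
      have h3' : (-1 : ℤ) < (a - c : ℤ) := by exact_mod_cast h3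
      omega
    subst hac
    have htv : tv L = tv M := by linarith
    rcases htL with hL | hL
    · subst hL
      have : M = [] := tv_eq_zero htM (by rw [← htv]; simp [tv])
      rw [this]
    · rcases htM with hM | hM
      · subst hM
        have : L = [] := tv_eq_zero (Or.inr hL) (by rw [htv]; simp [tv])
        exact absurd this hL.1
      · rw [tv, if_neg hL.1, tv, if_neg hM.1] at htv
        rw [ih M hL hM htv]

end Adj

namespace Adj

lemma dvd_helper (x y c a b : ℤ) (h : a*x + b*y = 1) (hd : y ∣ x * c) : y ∣ c := by
  obtain ⟨k, hk⟩ := hd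
  exact ⟨a*k + b*c, by linear_combination (-c)*h + a*hk⟩

end Adj

open Adj in
theorem adjoint_reverse_and_d (A As Ar : List ℤ) (hA : Admissible A) (hAs : Admissible As)
    (hAr : Admissible Ar)
    (h1 : inductance As = 1 - inductance A.reverse)
    (h2 : inductance Ar = 1 - inductance A.reverse.reverse) :
    As.reverse = Ar ∧ chainD A = chainD As := by
  rw [List.reverse_reverse] at h2
  set q := chainD A with hqdef
  set rB' := chainD A.tail with hrB'def
  set rB := chainD A.reverse.tail with hrBdef
  set qC := chainD As with hqCdef
  set rC := chainD As.tail with hrCdef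
  set rC' := chainD As.reverse.tail with hrC'def
  have hBq : chainD A.reverse = q := chainD_reverse A
  have hCq : chainD As.reverse = qC := chainD_reverse As
  have hAne := hA.1
  have hAsne := hAs.1
  -- bounds
  obtain ⟨hb1, hb2⟩ := dpos A hA
  obtain ⟨hb3, hb4⟩ := dpos A.reverse (admissible_reverse hA)
  rw [hBq] at hb4
  obtain ⟨hb5, hb6⟩ := dpos As hAs
  obtain ⟨hb7, hb8⟩ := dpos As.reverse (admissible_reverse hAs)
  rw [hCq] at hb8
  -- Bezout identities
  obtain ⟨s, hkA⟩ := key A hAne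
  obtain ⟨t, hkAs⟩ := key As hAsne
  simp only [← hqdef, ← hrB'def, ← hrBdef, ← hqCdef, ← hrCdef, ← hrC'def]
    at hb1 hb2 hb3 hb4 hb5 hb6 hb7 hb8 hkA hkAs
  -- hkA : rB' * rB + s * q = 1,  hkAs : rC * rC' + t * qC = 1
  have hq0 : ((q:ℚ)) ≠ 0 := by exact_mod_cast (by omega : q ≠ 0)
  have hqC0 : ((qC:ℚ)) ≠ 0 := by exact_mod_cast (by omega : qC ≠ 0)
  have h1' : (rC : ℚ) / (qC : ℚ) = 1 - (rB : ℚ) / (q : ℚ) := by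
    rw [inductance, inductance, hBq] at h1
    exact_mod_cast h1
  have hZ : rC * q = (q - rB) * qC := by
    have hh : (rC : ℚ) * q = ((q : ℚ) - rB) * qC := by
      field_simp at h1'
      linarith
    exact_mod_cast hh
  -- q = qC
  have hd1 : q ∣ qC :=
    dvd_helper (q - rB) q qC (-rB') (rB' + s) (by linear_combination hkA) ⟨rC, by linarith⟩
  have hd2 : qC ∣ q :=
    dvd_helper rC qC q rC' t (by linear_combination hkAs) ⟨q - rB, by linarith⟩
  have hq_eq : q = qC := Int.dvd_antisymm (by omega) (by omega) hd1 hd2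
  have hrC : rC = q - rB := by
    have hZ' : rC * q = (q - rB) * q := by rw [hZ, ← hq_eq]
    have hqne : q ≠ 0 := by omega
    exact mul_right_cancel₀ hqne hZ'
  -- rC' = q - rB'
  have hdvd : q ∣ rB' + rC' := by
    refine dvd_helper rB q (rB' + rC') rB' s hkA ⟨rC' - s + t, ?_⟩
    rw [← hq_eq] at hkAs
    linear_combination hkA - hkAs + rC' * hrC
  have hrC' : rC' = q - rB' := by
    obtain ⟨k, hk⟩ := hdvd
    rw [← hq_eq] at hb8
    have hk1 : k = 1 := by nlinarith
    rw [hk1, mul_one] at hk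
    omega
  refine ⟨?_, hq_eq⟩
  apply ind_inj _ _ (admissible_reverse hAs) hAr
  rw [h2]
  have eL : inductance As.reverse = (rC' : ℚ) / (qC : ℚ) := by
    rw [inductance, hCq, ← hrC'def]
  have eR : inductance A = (rB' : ℚ) / (q : ℚ) := by
    rw [inductance, ← hrB'def, ← hqdef]
  rw [eL, eR, hrC', ← hq_eq]
  push_cast
  field_simp
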